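/- arXiv:2105.04319 — 3 statements merged into one kernel-verified Lean document; each statement's English description precedes it below -/
import Mathlib

section
/- Convergence in finite dimensions: under the standing assumptions with Θ = ℝ^N (a finite-dimensional Euclidean space) and J(θ) = ‖θ‖₁ the ℓ¹-norm, suppose in addition that 𝓛 is μ-strongly convex for some μ > 0 (so 𝓛 has a unique minimizer θ*) and that the step sizes satisfy τ^(k) ≤ μ/(2δL²), are non-increasing, square-summable, and non-summable (Σ_{k=0}^∞ τ^(k) = ∞). Then, with d_k := E[D_{J_δ}^{v^(k)}(θ*, θ^(k))], the whole sequence converges: lim_{k→∞} d_k = 0, and in particular lim_{k→∞} E[‖θ* − θ^(k)‖²] = 0. -/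
open MeasureTheory Filter
open scoped RealInnerProductSpace ENNReal Topology

noncomputable section

/-- Subdifferential membership for an extended-real-valued functional on a Hilbert space. -/
def ESubgradAt {Θ : Type*} [NormedAddCommGroup Θ] [InnerProductSpace ℝ Θ]
    (J : Θ → EReal) (p θ : Θ) : Prop :=
  ∀ θ' : Θ, J θ + ((⟪p, θ' - θ⟫ : ℝ) : EReal) ≤ J θ'

/-- Convexity of an extended-real-valued functional. -/
def EConvexOn {Θ : Type*} [NormedAddCommGroup Θ] [InnerProductSpace ℝ Θ]
    (J : Θ → EReal) : Prop :=
  ∀ θ₁ θ₂ : Θ, ∀ a b : ℝ, 0 ≤ a → 0 ≤ b → a + b = 1 →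
    J (a • θ₁ + b • θ₂) ≤ (a : EReal) * J θ₁ + (b : EReal) * J θ₂

/-- Real-valued Bregman distance (used at points where `J` is finite). -/
def DBreg {Θ : Type*} [NormedAddCommGroup Θ] [InnerProductSpace ℝ Θ]
    (J : Θ → EReal) (p θbar θ : Θ) : ℝ :=
  (J θbar).toReal - (J θ).toReal - ⟪p, θbar - θ⟫

/-- Symmetric Bregman distance. -/
def DBregSym {Θ : Type*} [NormedAddCommGroup Θ] [InnerProductSpace ℝ Θ]
    (J : Θ → EReal) (p pbar θbar θ : Θ) : ℝ :=
  DBreg J p θbar θ + DBreg J pbar θ θbar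

/-- The elastic-net functional `J_δ(θ) = J(θ) + ‖θ‖²/(2δ)`. -/
def elasticNet {Θ : Type*} [NormedAddCommGroup Θ] [InnerProductSpace ℝ Θ]
    (J : Θ → EReal) (δ : ℝ) (θ : Θ) : EReal :=
  J θ + ((‖θ‖ ^ 2 / (2 * δ) : ℝ) : EReal)



/-- Deterministic convergence lemma. -/
lemma slb_conv_lemma (d a τ : ℕ → ℝ) (hd : ∀ k, 0 ≤ d k) (ha : ∀ k, 0 ≤ a k)
    (c C K : ℝ) (hc : 0 < c) (hC : 0 ≤ C) (hK : 0 ≤ K)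
    (hrec : ∀ k, d (k+1) ≤ d k - c * (τ k * a k) + C * τ k ^ 2)
    (hτpos : ∀ k, 0 < τ k) (hτsq : Summable (fun k => τ k ^ 2)) (hτns : ¬ Summable τ)
    (hbound : ∀ ε : ℝ, 0 < ε → ∃ M : ℝ, 0 < M ∧ ∀ k, d k ≤ ε + M * a k)
    (haK : ∀ k, a k ≤ K * d k) :
    Tendsto d atTop (nhds 0) ∧ Tendsto a atTop (nhds 0) := by
  set T : ℝ := ∑' k, τ k ^ 2 with hT
  set S : ℕ → ℝ := fun k => ∑ j ∈ Finset.range k, τ j ^ 2 with hS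
  have hSle : ∀ k, S k ≤ T := fun k =>
    Summable.sum_le_tsum _ (fun j _ => sq_nonneg _) hτsq
  set e : ℕ → ℝ := fun k => d k + C * (T - S k) with he
  have hee : ∀ k, 0 ≤ e k := fun k =>
    add_nonneg (hd k) (mul_nonneg hC (sub_nonneg.2 (hSle k)))
  have hstep : ∀ k, c * (τ k * a k) ≤ e k - e (k+1) := by
    intro k
    have h1 := hrec k
    have h2 : S (k+1) = S k + τ k ^ 2 := Finset.sum_range_succ _ _
    simp only [he, h2]
    nlinarith [h1]
  have hant : Antitone e := by
    apply antitone_nat_of_succ_le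
    intro k
    have := hstep k
    have h3 : 0 ≤ c * (τ k * a k) :=
      mul_nonneg hc.le (mul_nonneg (hτpos k).le (ha k))
    linarith
  have hetend : Tendsto e atTop (nhds (⨅ k, e k)) :=
    tendsto_atTop_ciInf hant ⟨0, fun x ⟨k, hk⟩ => hk ▸ hee k⟩
  set l : ℝ := ⨅ k, e k with hl
  have hl0 : 0 ≤ l := le_ciInf hee
  have hStend : Tendsto (fun k => T - S k) atTop (nhds 0) := by
    have := hτsq.hasSum.tendsto_sum_nat
    have h2 : Tendsto (fun k => T - S k) atTop (nhds (T - T)) :=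
      (tendsto_const_nhds).sub this
    simpa using h2
  have hdtend : Tendsto d atTop (nhds l) := by
    have h2 : Tendsto (fun k => e k - C * (T - S k)) atTop (nhds (l - C * 0)) :=
      hetend.sub (hStend.const_mul C)
    simpa [he] using h2
  have hsum : Summable (fun k => τ k * a k) := by
    apply summable_of_sum_range_le (c := e 0 / c)
      (fun k => mul_nonneg (hτpos k).le (ha k))
    intro n
    have htel : ∑ k ∈ Finset.range n, (e k - e (k+1)) = e 0 - e n :=
      Finset.sum_range_sub' e n
    have h1 : c * ∑ k ∈ Finset.range n, τ k * a k ≤ e 0 - e n := by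
      rw [Finset.mul_sum, ← htel]
      exact Finset.sum_le_sum (fun k _ => hstep k)
    rw [le_div_iff₀ hc, mul_comm]
    have := hee n; linarith
  have hlz : l = 0 := by
    by_contra hne
    have hlpos : 0 < l := lt_of_le_of_ne hl0 (Ne.symm hne)
    obtain ⟨M, hM, hMb⟩ := hbound (l/4) (by linarith)
    have hev : ∀ᶠ k in atTop, l/2 < d k :=
      hdtend.eventually (eventually_gt_nhds (by linarith))
    obtain ⟨K₀, hK₀⟩ := hev.exists_forall_of_atTop
    have hτs : Summable (fun k => τ (k + K₀)) := by
      refine Summable.of_nonneg_of_le (fun k => (hτpos _).le)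
        (f := fun k => (4*M/l) * (τ (k + K₀) * a (k + K₀))) ?_ ?_
      · intro k
        have hk := hK₀ (k + K₀) (Nat.le_add_left _ _)
        have hb := hMb (k + K₀)
        have hak : l/(4*M) ≤ a (k + K₀) := by
          rw [div_le_iff₀ (by linarith)]
          nlinarith
        have h1 : (l/(4*M)) * τ (k+K₀) ≤ a (k+K₀) * τ (k+K₀) :=
          mul_le_mul_of_nonneg_right hak (hτpos _).le
        have h2 : (4*M/l) * ((l/(4*M)) * τ (k+K₀)) = τ (k+K₀) := by
          field_simp
        have h3 := mul_le_mul_of_nonneg_left h1 (by positivity : (0:ℝ) ≤ 4*M/l)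
        rw [h2] at h3
        calc τ (k+K₀) ≤ (4*M/l) * (a (k+K₀) * τ (k+K₀)) := h3
        _ = (4*M/l) * (τ (k+K₀) * a (k+K₀)) := by ring
      · exact ((summable_nat_add_iff K₀).2 hsum).mul_left _
    exact hτns ((summable_nat_add_iff K₀).1 hτs)
  rw [hlz] at hdtend
  refine ⟨hdtend, ?_⟩
  have : Tendsto (fun k => K * d k) atTop (nhds (K * 0)) := hdtend.const_mul K
  rw [mul_zero] at this
  exact squeeze_zero ha haK this


/-- ℓ¹ functional on Euclidean space. -/
def slbL1 {n : ℕ} (x : EuclideanSpace ℝ (Fin n)) : ℝ := ∑ i, |x i|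

lemma slbL1_nonneg {n : ℕ} (x : EuclideanSpace ℝ (Fin n)) : 0 ≤ slbL1 x :=
  Finset.sum_nonneg (fun i _ => abs_nonneg _)

lemma slb_norm_sq {n : ℕ} (x : EuclideanSpace ℝ (Fin n)) : ‖x‖ ^ 2 = ∑ i, (x i) ^ 2 := by
  rw [EuclideanSpace.norm_eq, Real.sq_sqrt (Finset.sum_nonneg (fun i _ => sq_nonneg _))]
  simp [Real.norm_eq_abs, sq_abs]

/-- Convexity of ℓ¹ along segments. -/
lemma slbL1_convex {n : ℕ} (x y : EuclideanSpace ℝ (Fin n)) {s : ℝ} (h0 : 0 ≤ s) (h1 : s ≤ 1) :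
    slbL1 ((1 - s) • x + s • y) ≤ (1 - s) * slbL1 x + s * slbL1 y := by
  unfold slbL1
  rw [Finset.mul_sum, Finset.mul_sum, ← Finset.sum_add_distrib]
  refine Finset.sum_le_sum (fun i _ => ?_)
  have : ((1 - s) • x + s • y) i = (1 - s) * x i + s * y i := rfl
  rw [this]
  calc |(1 - s) * x i + s * y i| ≤ |(1-s) * x i| + |s * y i| := abs_add_le _ _
  _ = (1-s) * |x i| + s * |y i| := by
      rw [abs_mul, abs_mul, abs_of_nonneg (by linarith), abs_of_nonneg h0]

/-- Scalar soft-thresholding. -/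
def slbSt (δ c : ℝ) : ℝ := max (c - δ) 0 - max (-c - δ) 0

lemma slbSt_min {δ : ℝ} (hδ : 0 < δ) (c u : ℝ) :
    (slbSt δ c - c) ^ 2 / (2*δ) + |slbSt δ c| ≤ (u - c) ^ 2 / (2*δ) + |u| := by
  rw [div_add' _ _ _ (by positivity), div_add' _ _ _ (by positivity),
    div_le_div_iff_of_pos_right (by positivity)]
  rcases le_or_gt δ c with h | h
  · have e : slbSt δ c = c - δ := by
      unfold slbSt
      rw [max_eq_left (by linarith : (0:ℝ) ≤ c - δ), max_eq_right (by linarith : -c - δ ≤ (0:ℝ))]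
      ring
    rw [e, abs_of_nonneg (by linarith : (0:ℝ) ≤ c - δ)]
    rcases abs_cases u with ⟨h2, h3⟩ | ⟨h2, h3⟩ <;> rw [h2]
    · nlinarith [sq_nonneg (u - c + δ), mul_nonneg hδ.le h3]
    · nlinarith [sq_nonneg (u - c + δ), mul_nonneg hδ.le (neg_nonneg.2 h3.le)]
  rcases le_or_gt c (-δ) with h' | h'
  · have e : slbSt δ c = c + δ := by
      unfold slbSt
      rw [max_eq_right (by linarith : c - δ ≤ (0:ℝ)), max_eq_left (by linarith : (0:ℝ) ≤ -c - δ)]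
      ring
    rw [e, abs_of_nonpos (by linarith : c + δ ≤ (0:ℝ))]
    rcases abs_cases u with ⟨h2, h3⟩ | ⟨h2, h3⟩ <;> rw [h2]
    · nlinarith [sq_nonneg (u - c - δ), mul_nonneg hδ.le h3]
    · nlinarith [sq_nonneg (u - c - δ), mul_nonneg hδ.le (neg_nonneg.2 h3.le)]
  · have e : slbSt δ c = 0 := by
      unfold slbSt
      rw [max_eq_right (by linarith : c - δ ≤ (0:ℝ)), max_eq_right (by linarith : -c - δ ≤ (0:ℝ))]
      ring
    rw [e, abs_zero]
    rcases abs_cases u with ⟨h2, h3⟩ | ⟨h2, h3⟩ <;> rw [h2]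
    · nlinarith [mul_nonneg h3 (by linarith : (0:ℝ) ≤ u + 2*(δ - c))]
    · nlinarith [mul_nonneg (neg_nonneg.2 h3.le) (by linarith : (0:ℝ) ≤ 2*c + 2*δ), sq_nonneg u]

/-- Vector soft-thresholding. -/
def slbST {n : ℕ} (δ : ℝ) (z : EuclideanSpace ℝ (Fin n)) : EuclideanSpace ℝ (Fin n) :=
  WithLp.toLp 2 (fun i => slbSt δ (z i))

lemma slbST_measurable {n : ℕ} (δ : ℝ) : Measurable (slbST (n := n) δ) := by
  refine (WithLp.measurable_toLp 2 (Fin n → ℝ)).comp (measurable_pi_lambda _ (fun i => ?_))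
  have h1 : Measurable fun z : EuclideanSpace ℝ (Fin n) => z i :=
    (measurable_pi_apply i).comp (WithLp.measurable_ofLp 2 (Fin n → ℝ))
  exact ((h1.sub measurable_const).max measurable_const).sub
    ((h1.neg.sub measurable_const).max measurable_const)

/-- Soft thresholding minimizes the prox objective. -/
lemma slbST_min {n : ℕ} {δ : ℝ} (hδ : 0 < δ) (z t : EuclideanSpace ℝ (Fin n)) :
    ‖slbST δ z - z‖ ^ 2 / (2*δ) + slbL1 (slbST δ z) ≤ ‖t - z‖ ^ 2 / (2*δ) + slbL1 t := by
  unfold slbL1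
  rw [slb_norm_sq, slb_norm_sq, Finset.sum_div, Finset.sum_div,
    ← Finset.sum_add_distrib, ← Finset.sum_add_distrib]
  refine Finset.sum_le_sum (fun i _ => ?_)
  have h1 : (slbST δ z - z) i = slbSt δ (z i) - z i := rfl
  have h2 : (t - z) i = t i - z i := rfl
  have h3 : (slbST δ z) i = slbSt δ (z i) := rfl
  rw [h1, h2, h3]
  exact slbSt_min hδ (z i) (t i)

/-- Uniqueness of the prox minimizer. -/
lemma slb_prox_unique {n : ℕ} {δ : ℝ} (hδ : 0 < δ) {z a b : EuclideanSpace ℝ (Fin n)}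
    (ha : ∀ t, ‖a - z‖ ^ 2 / (2*δ) + slbL1 a ≤ ‖t - z‖ ^ 2 / (2*δ) + slbL1 t)
    (hb : ∀ t, ‖b - z‖ ^ 2 / (2*δ) + slbL1 b ≤ ‖t - z‖ ^ 2 / (2*δ) + slbL1 t) :
    a = b := by
  set m : EuclideanSpace ℝ (Fin n) := (1/2 : ℝ) • a + (1/2 : ℝ) • b with hm
  have hpar : ‖m - z‖^2 = (‖a - z‖^2 + ‖b - z‖^2)/2 - ‖a - b‖^2/4 := by
    have hp := parallelogram_law_with_norm ℝ ((1/2 : ℝ) • (a - z)) ((1/2 : ℝ) • (b - z))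
    have e1 : (1/2 : ℝ) • (a - z) + (1/2 : ℝ) • (b - z) = m - z := by
      rw [hm]; module
    have e2 : (1/2 : ℝ) • (a - z) - (1/2 : ℝ) • (b - z) = (1/2 : ℝ) • (a - b) := by module
    rw [e1, e2] at hp
    have n1 : ‖(1/2 : ℝ) • (a - z)‖ = (1/2) * ‖a - z‖ := by
      rw [norm_smul]; simp
    have n2 : ‖(1/2 : ℝ) • (b - z)‖ = (1/2) * ‖b - z‖ := by
      rw [norm_smul]; simp
    have n3 : ‖(1/2 : ℝ) • (a - b)‖ = (1/2) * ‖a - b‖ := by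
      rw [norm_smul]; simp
    rw [n1, n2, n3] at hp
    nlinarith [hp]
  have hconv : slbL1 m ≤ (slbL1 a + slbL1 b)/2 := by
    have := slbL1_convex a b (s := 1/2) (by norm_num) (by norm_num)
    have e : ((1:ℝ) - 1/2) = 1/2 := by norm_num
    rw [e] at this
    calc slbL1 m ≤ (1/2) * slbL1 a + (1/2) * slbL1 b := this
    _ = (slbL1 a + slbL1 b)/2 := by ring
  have hab := ha b
  have hba := hb a
  have ham := ha m
  have h1 : ‖m - z‖^2/(2*δ) + slbL1 m ≤ ‖a-z‖^2/(2*δ) + slbL1 a - ‖a-b‖^2/(8*δ) := by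
    rw [hpar]
    have he : ((‖a - z‖^2 + ‖b - z‖^2)/2 - ‖a - b‖^2/4)/(2*δ)
        = ‖a-z‖^2/(2*δ)/2 + ‖b-z‖^2/(2*δ)/2 - ‖a-b‖^2/(8*δ) := by
      field_simp; ring
    rw [he]
    linarith [hconv, hba]
  have hQ : ‖a-b‖^2/(8*δ) ≤ 0 := by linarith
  have hzero : ‖a - b‖^2 ≤ 0 := by
    by_contra hpos
    push_neg at hpos
    have : 0 < ‖a-b‖^2/(8*δ) := div_pos hpos (by linarith)
    linarith
  have hn : ‖a - b‖ = 0 := by nlinarith [norm_nonneg (a - b), sq_nonneg ‖a-b‖]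
  exact sub_eq_zero.mp (norm_eq_zero.mp hn)

lemma slbL1_def {n : ℕ} (x : EuclideanSpace ℝ (Fin n)) : slbL1 x = ∑ i, |x i| := rfl
/-- From prox-minimality to approximate ℓ¹ subgradient. -/
lemma slb_M_to_star {n : ℕ} {δ : ℝ} (hδ : 0 < δ) {A V : EuclideanSpace ℝ (Fin n)}
    (hM : ∀ t, ‖A - δ • V‖ ^ 2 / (2*δ) + slbL1 A ≤ ‖t - δ • V‖ ^ 2 / (2*δ) + slbL1 t) :
    ∀ t, slbL1 A + ⟪V - δ⁻¹ • A, t - A⟫ ≤ slbL1 t + ‖t - A‖ ^ 2 / (2*δ) := by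
  intro t
  have hid : ‖t - δ • V‖ ^ 2 = ‖t - A‖ ^ 2 + 2 * ⟪t - A, A - δ • V⟫ + ‖A - δ • V‖ ^ 2 := by
    have : t - δ • V = (t - A) + (A - δ • V) := by abel
    rw [this, norm_add_sq_real]
  have h := hM t
  rw [hid] at h
  have hip : ⟪V - δ⁻¹ • A, t - A⟫ = - (⟪t - A, A - δ • V⟫ / δ) := by
    have e1 : V - δ⁻¹ • A = (-δ⁻¹) • (A - δ • V) := by
      rw [smul_sub, smul_smul]
      field_simp
      module
    rw [e1, real_inner_smul_left, real_inner_comm]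
    field_simp
  rw [hip]
  have h2 : (‖t - A‖ ^ 2 + 2 * ⟪t - A, A - δ • V⟫ + ‖A - δ • V‖ ^ 2) / (2*δ)
      = ‖t - A‖ ^ 2/(2*δ) + ⟪t - A, A - δ • V⟫/δ + ‖A - δ • V‖ ^ 2/(2*δ) := by
    field_simp
  rw [h2] at h
  linarith

/-- Approximate subgradient implies exact subgradient, by scaling. -/
lemma slb_scale {n : ℕ} {δ : ℝ} (hδ : 0 < δ) {A p : EuclideanSpace ℝ (Fin n)}
    (h : ∀ t, slbL1 A + ⟪p, t - A⟫ ≤ slbL1 t + ‖t - A‖ ^ 2 / (2*δ)) :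
    ∀ u, slbL1 A + ⟪p, u - A⟫ ≤ slbL1 u := by
  intro u
  refine le_of_forall_pos_le_add (fun ε hε => ?_)
  set s : ℝ := min 1 (2*δ*ε/(‖u - A‖^2 + 1)) with hs
  have hs0 : 0 < s := lt_min one_pos (by positivity)
  have hs1 : s ≤ 1 := min_le_left _ _
  have ht := h (A + s • (u - A))
  have e1 : A + s • (u - A) - A = s • (u - A) := by abel
  have e2 : A + s • (u - A) = (1 - s) • A + s • u := by module
  rw [e1, real_inner_smul_right, norm_smul] at ht
  have e3 : (‖s • (u-A)‖)^2 = s^2 * ‖u - A‖^2 := by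
    rw [norm_smul]
    simp [abs_of_pos hs0, mul_pow]
  have hconv := slbL1_convex A u hs0.le hs1
  rw [e2] at ht
  have e4 : (‖s‖ * ‖u - A‖)^2 = s^2 * ‖u - A‖^2 := by
    rw [mul_pow, Real.norm_eq_abs, sq_abs]
  rw [e4] at ht
  -- ht : slbL1 A + s * ⟪p, u - A⟫ ≤ slbL1 ((1-s)•A + s•u) + s^2 * ‖u-A‖^2/(2δ)
  have h5 : s * (slbL1 A + ⟪p, u - A⟫) ≤ s * slbL1 u + s^2 * ‖u - A‖^2/(2*δ) := by
    nlinarith [ht, hconv]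
  have h6 : slbL1 A + ⟪p, u - A⟫ ≤ slbL1 u + s * ‖u - A‖^2/(2*δ) := by
    have h5' : s * (slbL1 A + ⟪p, u - A⟫) ≤ s * (slbL1 u + s * ‖u - A‖^2/(2*δ)) := by
      calc s * (slbL1 A + ⟪p, u - A⟫) ≤ s * slbL1 u + s^2 * ‖u - A‖^2/(2*δ) := h5
      _ = s * (slbL1 u + s * ‖u - A‖^2/(2*δ)) := by ring
    exact le_of_mul_le_mul_left h5' hs0
  have h7 : s * ‖u - A‖^2/(2*δ) ≤ ε := by
    have hsle : s ≤ 2*δ*ε/(‖u - A‖^2 + 1) := min_le_right _ _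
    have h8 : s * ‖u - A‖^2 ≤ (2*δ*ε/(‖u - A‖^2 + 1)) * ‖u - A‖^2 :=
      mul_le_mul_of_nonneg_right hsle (sq_nonneg _)
    have h9 : (2*δ*ε/(‖u - A‖^2 + 1)) * ‖u - A‖^2 ≤ 2*δ*ε := by
      rw [div_mul_eq_mul_div, div_le_iff₀ (by positivity)]
      nlinarith [sq_nonneg ‖u - A‖]
    rw [div_le_iff₀ (by positivity : (0:ℝ) < 2*δ)]
    nlinarith [h8.trans h9]
  linarith

/-- Strong subgradient inequality for the elastic net. -/
lemma slb_SG {n : ℕ} {δ : ℝ} (hδ : 0 < δ) {A V : EuclideanSpace ℝ (Fin n)}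
    (h : ∀ u, slbL1 A + ⟪V - δ⁻¹ • A, u - A⟫ ≤ slbL1 u) :
    ∀ t, (slbL1 A + ‖A‖ ^ 2/(2*δ)) + ⟪V, t - A⟫ + ‖t - A‖ ^ 2/(2*δ)
      ≤ slbL1 t + ‖t‖ ^ 2/(2*δ) := by
  intro t
  have h1 := h t
  have hid : ‖t‖ ^ 2 = ‖A‖ ^ 2 + 2 * ⟪A, t - A⟫ + ‖t - A‖ ^ 2 := by
    have : t = A + (t - A) := by abel
    nth_rewrite 1 [this]
    rw [norm_add_sq_real]
  have hip : ⟪V, t - A⟫ = ⟪V - δ⁻¹ • A, t - A⟫ + δ⁻¹ * ⟪A, t - A⟫ := by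
    rw [inner_sub_left, real_inner_smul_left]
    ring
  rw [hip, hid]
  have e : (‖A‖ ^ 2 + 2 * ⟪A, t - A⟫ + ‖t - A‖ ^ 2)/(2*δ)
      = ‖A‖ ^ 2/(2*δ) + δ⁻¹ * ⟪A, t - A⟫ + ‖t - A‖ ^ 2/(2*δ) := by
    field_simp
  rw [e]
  linarith

/-- Expansion of the prox objective. -/
lemma slb_expand {n : ℕ} {δ : ℝ} (hδ : 0 < δ) (x V : EuclideanSpace ℝ (Fin n)) :
    ‖x - δ • V‖ ^ 2 / (2*δ) = ‖x‖ ^ 2/(2*δ) - ⟪V, x⟫ + δ * ‖V‖ ^ 2 / 2 := by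
  rw [norm_sub_sq_real, real_inner_smul_right, norm_smul]
  rw [real_inner_comm]
  have : (‖δ‖ * ‖V‖)^2 = δ^2 * ‖V‖^2 := by
    rw [mul_pow, Real.norm_eq_abs, sq_abs]
  rw [this]
  field_simp

/-- Deterministic iteration map. -/
def slbIter {n : ℕ} {Ω : Type*} (g : EuclideanSpace ℝ (Fin n) → Ω → EuclideanSpace ℝ (Fin n))
    (τ : ℕ → ℝ) (δ : ℝ) (θ0 v0 : EuclideanSpace ℝ (Fin n)) :
    ℕ → (ℕ → Ω) → EuclideanSpace ℝ (Fin n) × EuclideanSpace ℝ (Fin n)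
  | 0, _ => (θ0, v0)
  | (k+1), s =>
      let p := slbIter g τ δ θ0 v0 k s
      let v' := p.2 - τ k • g p.1 (s k)
      (slbST δ (δ • v'), v')

lemma slbIter_measurable {n : ℕ} {Ω : Type*} [MeasurableSpace Ω]
    {g : EuclideanSpace ℝ (Fin n) → Ω → EuclideanSpace ℝ (Fin n)}
    (hg : Measurable (Function.uncurry g)) (τ : ℕ → ℝ) (δ : ℝ)
    (θ0 v0 : EuclideanSpace ℝ (Fin n)) :
    ∀ k, Measurable (slbIter g τ δ θ0 v0 k) := by
  intro k
  induction k with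
  | zero => exact measurable_const
  | succ k ih =>
    have hp1 : Measurable fun s : ℕ → Ω => (slbIter g τ δ θ0 v0 k s).1 :=
      measurable_fst.comp ih
    have hp2 : Measurable fun s : ℕ → Ω => (slbIter g τ δ θ0 v0 k s).2 :=
      measurable_snd.comp ih
    have hGg : Measurable fun s : ℕ → Ω => g (slbIter g τ δ θ0 v0 k s).1 (s k) :=
      hg.comp (hp1.prodMk (measurable_pi_apply k))
    have hv' : Measurable fun s : ℕ → Ω =>
        (slbIter g τ δ θ0 v0 k s).2 - τ k • g (slbIter g τ δ θ0 v0 k s).1 (s k) :=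
      hp2.sub (hGg.const_smul (τ k))
    exact (((slbST_measurable δ).comp (hv'.const_smul δ))).prodMk hv'

lemma slbIter_local {n : ℕ} {Ω : Type*}
    (g : EuclideanSpace ℝ (Fin n) → Ω → EuclideanSpace ℝ (Fin n))
    (τ : ℕ → ℝ) (δ : ℝ) (θ0 v0 : EuclideanSpace ℝ (Fin n)) :
    ∀ k (s s' : ℕ → Ω), (∀ i, i < k → s i = s' i) →
      slbIter g τ δ θ0 v0 k s = slbIter g τ δ θ0 v0 k s' := by
  intro k
  induction k with
  | zero => intro s s' _; rfl
  | succ k ih =>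
    intro s s' h
    have h1 : slbIter g τ δ θ0 v0 k s = slbIter g τ δ θ0 v0 k s' :=
      ih s s' (fun i hi => h i (Nat.lt_succ_of_lt hi))
    show (let p := slbIter g τ δ θ0 v0 k s; let v' := p.2 - τ k • g p.1 (s k);
      (slbST δ (δ • v'), v')) = _
    simp only [slbIter, h1, h k (Nat.lt_succ_self k)]

/-- Independence of a function of the first `k` coordinates from the `k`-th. -/
lemma slb_indep {Ω Ωp : Type*} [MeasurableSpace Ω] [MeasurableSpace Ωp] {P : Measure Ωp}
    (X : ℕ → Ωp → Ω) (hXmeas : ∀ k, Measurable (X k))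
    (hXindep : ProbabilityTheory.iIndepFun X P)
    {β : Type*} [MeasurableSpace β] (k : ℕ)
    (Φ : (↑(Finset.range k) → Ω) → β) (hΦ : Measurable Φ)
    {Y : Ωp → β} (hY : ∀ ω, Y ω = Φ (fun i => X i ω)) :
    ProbabilityTheory.IndepFun Y (X k) P := by
  have hdis : Disjoint (Finset.range k) ({k} : Finset ℕ) := by
    simp [Finset.disjoint_singleton_right]
  have h := hXindep.indepFun_finset (Finset.range k) {k} hdis hXmeas
  have h2 := h.comp hΦ (measurable_pi_apply (⟨k, by simp⟩ : ({k} : Finset ℕ)))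
  have e1 : (Φ ∘ fun a (i : ↑(Finset.range k)) => X i a) = Y := by
    funext ω; exact (hY ω).symm
  have e2 : ((fun f : ({k} : Finset ℕ) → Ω => f ⟨k, by simp⟩) ∘
      fun a (i : ({k} : Finset ℕ)) => X i a) = X k := rfl
  rwa [e1, e2] at h2

/-- Transfer of integrals through independence: real-valued version. -/
lemma slb_transfer_eq {n : ℕ} {Ω Ωp : Type*} [MeasurableSpace Ω] [MeasurableSpace Ωp]
    (P : Measure Ωp) [IsProbabilityMeasure P] (μ : Measure Ω) [IsProbabilityMeasure μ]
    {Y : Ωp → EuclideanSpace ℝ (Fin n)} {Z : Ωp → Ω} (hY : Measurable Y) (hZ : Measurable Z)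
    (hind : ProbabilityTheory.IndepFun Y Z P) (hlaw : Measure.map Z P = μ)
    (F : EuclideanSpace ℝ (Fin n) × Ω → ℝ) (hF : Measurable F)
    (hFi : Integrable (fun ω => F (Y ω, Z ω)) P) :
    ∫ ω, F (Y ω, Z ω) ∂P = ∫ ω, ∫ w, F (Y ω, w) ∂μ ∂P := by
  set ν := Measure.map Y P with hν
  have hmap : Measure.map (fun ω => (Y ω, Z ω)) P = ν.prod μ := by
    rw [hν, ← hlaw]
    exact (ProbabilityTheory.indepFun_iff_map_prod_eq_prod_map_map
      hY.aemeasurable hZ.aemeasurable).mp hind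
  haveI : IsProbabilityMeasure ν := Measure.isProbabilityMeasure_map hY.aemeasurable
  have hpair : Measurable fun ω => (Y ω, Z ω) := hY.prodMk hZ
  have hFsm : AEStronglyMeasurable F (ν.prod μ) := hF.stronglyMeasurable.aestronglyMeasurable
  have h1 : ∫ ω, F (Y ω, Z ω) ∂P = ∫ z, F z ∂(ν.prod μ) := by
    rw [← hmap, integral_map hpair.aemeasurable
      (hF.stronglyMeasurable.aestronglyMeasurable)]
  have hFint : Integrable F (ν.prod μ) := by
    rw [← hmap]
    exact (integrable_map_measure (hmap ▸ hFsm) hpair.aemeasurable).mpr hFi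
  have h2 : ∫ z, F z ∂(ν.prod μ) = ∫ x, ∫ w, F (x, w) ∂μ ∂ν := integral_prod F hFint
  have h3 : ∫ x, ∫ w, F (x, w) ∂μ ∂ν = ∫ ω, ∫ w, F (Y ω, w) ∂μ ∂P := by
    have hFm : StronglyMeasurable fun x => ∫ w, F (x, w) ∂μ := by
      have h0 : StronglyMeasurable (Function.uncurry (fun x w => F (x, w))) :=
        hF.stronglyMeasurable
      exact h0.integral_prod_right
    rw [hν, integral_map hY.aemeasurable hFm.aestronglyMeasurable]
  rw [h1, h2, h3]

/-- Transfer of lintegrals through independence. -/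
lemma slb_transfer_lint {n : ℕ} {Ω Ωp : Type*} [MeasurableSpace Ω] [MeasurableSpace Ωp]
    (P : Measure Ωp) [IsProbabilityMeasure P] (μ : Measure Ω) [IsProbabilityMeasure μ]
    {Y : Ωp → EuclideanSpace ℝ (Fin n)} {Z : Ωp → Ω} (hY : Measurable Y) (hZ : Measurable Z)
    (hind : ProbabilityTheory.IndepFun Y Z P) (hlaw : Measure.map Z P = μ)
    (F : EuclideanSpace ℝ (Fin n) × Ω → ℝ≥0∞) (hF : Measurable F) :
    ∫⁻ ω, F (Y ω, Z ω) ∂P = ∫⁻ ω, ∫⁻ w, F (Y ω, w) ∂μ ∂P := by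
  set ν := Measure.map Y P with hν
  have hmap : Measure.map (fun ω => (Y ω, Z ω)) P = ν.prod μ := by
    rw [hν, ← hlaw]
    exact (ProbabilityTheory.indepFun_iff_map_prod_eq_prod_map_map
      hY.aemeasurable hZ.aemeasurable).mp hind
  have hpair : Measurable fun ω => (Y ω, Z ω) := hY.prodMk hZ
  have h1 : ∫⁻ ω, F (Y ω, Z ω) ∂P = ∫⁻ z, F z ∂(ν.prod μ) := by
    rw [← hmap, lintegral_map hF hpair]
  have h2 : ∫⁻ z, F z ∂(ν.prod μ) = ∫⁻ x, ∫⁻ w, F (x, w) ∂μ ∂ν :=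
    lintegral_prod F hF.aemeasurable
  have h3 : ∫⁻ x, ∫⁻ w, F (x, w) ∂μ ∂ν = ∫⁻ ω, ∫⁻ w, F (Y ω, w) ∂μ ∂P := by
    have hFm : Measurable fun x => ∫⁻ w, F (x, w) ∂μ := by
      have : Measurable (Function.uncurry (fun x w => F (x, w))) := hF
      exact this.lintegral_prod_right
    rw [hν, lintegral_map hFm hY]
  rw [h1, h2, h3]

/-- The real-valued elastic-net Bregman distance. -/
lemma slb_young {δ a b : ℝ} (hδ : 0 < δ) : a*b ≤ δ*a^2/2 + b^2/(2*δ) := by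
  rw [← sub_nonneg]
  have e : δ*a^2/2 + b^2/(2*δ) - a*b = (δ*a - b)^2/(2*δ) := by
    field_simp; ring
  rw [e]; positivity

def slbD {n : ℕ} (δ : ℝ) (θs A V : EuclideanSpace ℝ (Fin n)) : ℝ :=
  (slbL1 θs + ‖θs‖ ^ 2/(2*δ)) - (slbL1 A + ‖A‖ ^ 2/(2*δ)) - ⟪V, θs - A⟫

lemma slbD_lower {n : ℕ} {δ : ℝ} {A V θs : EuclideanSpace ℝ (Fin n)}
    (hSG : (slbL1 A + ‖A‖ ^ 2/(2*δ)) + ⟪V, θs - A⟫ + ‖θs - A‖ ^ 2/(2*δ)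
      ≤ slbL1 θs + ‖θs‖ ^ 2/(2*δ)) :
    ‖θs - A‖ ^ 2/(2*δ) ≤ slbD δ θs A V := by
  unfold slbD; linarith

/-- The one-step pathwise inequality. -/
lemma slbD_pathwise {n : ℕ} {δ : ℝ} (hδ : 0 < δ) {A A' V G θs : EuclideanSpace ℝ (Fin n)}
    {t : ℝ}
    (hSG : (slbL1 A + ‖A‖ ^ 2/(2*δ)) + ⟪V, A' - A⟫ + ‖A' - A‖ ^ 2/(2*δ)
      ≤ slbL1 A' + ‖A'‖ ^ 2/(2*δ)) :
    slbD δ θs A' (V - t • G) ≤ slbD δ θs A V + t * ⟪G, θs - A⟫ + (δ*t^2/2) * ‖G‖ ^ 2 := by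
  have young : t * (⟪G, A⟫ - ⟪G, A'⟫) ≤ δ*t^2/2 * ‖G‖ ^ 2 + ‖A' - A‖ ^ 2/(2*δ) := by
    have hcs : ⟪t • G, A - A'⟫ ≤ ‖t • G‖ * ‖A - A'‖ := real_inner_le_norm _ _
    rw [real_inner_smul_left, inner_sub_right, norm_smul, norm_sub_rev] at hcs
    have key : ‖t‖ * ‖G‖ * ‖A' - A‖ ≤ δ*t^2/2 * ‖G‖ ^ 2 + ‖A' - A‖ ^ 2/(2*δ) := by
      have hy := slb_young (a := ‖t‖*‖G‖) (b := ‖A' - A‖) hδ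
      have h2 : δ*(‖t‖*‖G‖)^2/2 = δ*t^2/2*‖G‖^2 := by
        rw [mul_pow, Real.norm_eq_abs, sq_abs]; ring
      rw [h2] at hy
      linarith [hy]
    nlinarith [hcs, key]
  unfold slbD
  simp only [inner_sub_left, inner_sub_right, real_inner_smul_left] at *
  nlinarith [hSG, young]

/-- Upper bound on the Bregman distance by the coordinate-wise distance. -/
lemma slbD_upper {n : ℕ} {δ : ℝ} (hδ : 0 < δ) {A V θs : EuclideanSpace ℝ (Fin n)}
    (hsub : slbL1 A + ⟪V - δ⁻¹ • A, ((2:ℝ) • A - θs) - A⟫ ≤ slbL1 ((2:ℝ) • A - θs)) :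
    slbD δ θs A V ≤ (∑ i, 2*|θs i - A i|) + ‖θs - A‖ ^ 2/(2*δ) := by
  have hid : ‖θs‖ ^ 2 = ‖A‖ ^ 2 + 2 * ⟪A, θs - A⟫ + ‖θs - A‖ ^ 2 := by
    have : θs = A + (θs - A) := by abel
    nth_rewrite 1 [this]
    rw [norm_add_sq_real]
  have hip : ⟪V, θs - A⟫ = ⟪V - δ⁻¹ • A, θs - A⟫ + δ⁻¹ * ⟪A, θs - A⟫ := by
    rw [inner_sub_left, real_inner_smul_left]; ring
  have hsum : slbL1 θs - 2 * slbL1 A + slbL1 ((2:ℝ) • A - θs) ≤ ∑ i, 2*|θs i - A i| := by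
    unfold slbL1
    rw [show (2:ℝ) * ∑ i, |A i| = ∑ i, 2 * |A i| from Finset.mul_sum _ _ _]
    rw [← Finset.sum_sub_distrib, ← Finset.sum_add_distrib]
    refine Finset.sum_le_sum (fun i _ => ?_)
    have e : ((2:ℝ) • A - θs) i = 2 * A i - θs i := rfl
    rw [e]
    have h1 : |2 * A i - θs i| ≤ |A i - θs i| + |A i| := by
      have : 2 * A i - θs i = (A i - θs i) + A i := by ring
      rw [this]; exact abs_add_le _ _
    have h2 : |θs i| ≤ |θs i - A i| + |A i| := by
      have : θs i = (θs i - A i) + A i := by ring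
      nth_rewrite 1 [this]; exact abs_add_le _ _
    have h3 : |A i - θs i| = |θs i - A i| := abs_sub_comm _ _
    linarith
  have hface : ⟪V - δ⁻¹ • A, ((2:ℝ) • A - θs) - A⟫ = - ⟪V - δ⁻¹ • A, θs - A⟫ := by
    have e : ((2:ℝ) • A - θs) - A = -(θs - A) := by module
    rw [e, inner_neg_right]
  rw [hface] at hsub
  unfold slbD
  rw [hip, hid]
  have e2 : (‖A‖ ^ 2 + 2 * ⟪A, θs - A⟫ + ‖θs - A‖ ^ 2)/(2*δ)
      = ‖A‖ ^ 2/(2*δ) + δ⁻¹ * ⟪A, θs - A⟫ + ‖θs - A‖ ^ 2/(2*δ) := by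
    field_simp
  rw [e2]
  linarith

/-- Coordinatewise AM–GM bound for the ℓ¹ term. -/
lemma slb_sum_bound {n : ℕ} (w : EuclideanSpace ℝ (Fin n)) {ε : ℝ} (hε : 0 < ε) :
    (∑ i, 2*|w i|) ≤ ε + (((n:ℝ)+1)/ε) * ‖w‖ ^ 2 := by
  set η : ℝ := ε/((n:ℝ)+1) with hη
  have hηpos : 0 < η := by positivity
  have hpt : ∀ i : Fin n, 2*|w i| ≤ η + (w i)^2/η := by
    intro i
    have hm : 2*|w i| * η ≤ η^2 + (w i)^2 := by
      nlinarith [sq_nonneg (|w i| - η), sq_abs (w i)]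
    calc 2*|w i| = (2*|w i| * η)/η := by field_simp
    _ ≤ (η^2 + (w i)^2)/η := by gcongr
    _ = η + (w i)^2/η := by field_simp
  calc (∑ i, 2*|w i|) ≤ ∑ i : Fin n, (η + (w i)^2/η) := Finset.sum_le_sum (fun i _ => hpt i)
  _ = (n:ℝ) * η + (∑ i, (w i)^2)/η := by
      rw [Finset.sum_add_distrib, Finset.sum_const, Finset.sum_div]
      simp [nsmul_eq_mul]
  _ ≤ ε + (((n:ℝ)+1)/ε) * ‖w‖ ^ 2 := by
      rw [slb_norm_sq]
      have h1 : (n:ℝ) * η ≤ ε := by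
        rw [hη, mul_comm, div_mul_eq_mul_div,
          div_le_iff₀ (by positivity : (0:ℝ) < (n:ℝ)+1)]
        nlinarith [Nat.cast_nonneg (α := ℝ) n, hε.le]
      have h2 : (∑ i, (w i)^2)/η = (((n:ℝ)+1)/ε) * (∑ i, (w i)^2) := by
        rw [hη]
        field_simp
      rw [h2]
      linarith
set_option maxHeartbeats 2000000 in
/-- **Convergence in finite dimensions with `ℓ¹` regularization:** the whole sequence of
Bregman distances to the minimizer, and hence the mean squared distance, converges to zero. -/
theorem stochastic_linBreg_convergence_finite_dim
    (N : ℕ)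
    {Ω : Type*} [MeasurableSpace Ω] (μ : Measure Ω) [IsProbabilityMeasure μ]
    {Ωp : Type*} [MeasurableSpace Ωp] (P : Measure Ωp) [IsProbabilityMeasure P]
    (X : ℕ → Ωp → Ω) (hXmeas : ∀ k, Measurable (X k))
    (hXindep : ProbabilityTheory.iIndepFun X P)
    (hXdist : ∀ k, Measure.map (X k) P = μ)
    (𝓛 : EuclideanSpace ℝ (Fin N) → ℝ) (gradL : EuclideanSpace ℝ (Fin N) → EuclideanSpace ℝ (Fin N))
    (hgrad : ∀ x, HasGradientAt 𝓛 (gradL x) x)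
    (hLnonneg : ∀ x, 0 ≤ 𝓛 x)
    (L : ℝ) (hL : 0 < L) (hLip : ∀ x y, ‖gradL x - gradL y‖ ≤ L * ‖x - y‖)
    (g : EuclideanSpace ℝ (Fin N) → Ω → EuclideanSpace ℝ (Fin N))
    (hgmeas : Measurable (Function.uncurry g))
    (hgint : ∀ x, Integrable (g x) μ)
    (hunbiased : ∀ x, ∫ ω, g x ω ∂μ = gradL x)
    (σ : ℝ) (hσ : 0 ≤ σ)
    (hvarint : ∀ x, Integrable (fun ω => ‖g x ω - gradL x‖ ^ 2) μ)
    (hvar : ∀ x, ∫ ω, ‖g x ω - gradL x‖ ^ 2 ∂μ ≤ σ ^ 2)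
    (δ : ℝ) (hδ : 0 < δ)
    (J : EuclideanSpace ℝ (Fin N) → EReal)
    (hJ : ∀ x, J x = ((∑ i, |x i| : ℝ) : EReal))
    (μc : ℝ) (hμc : 0 < μc)
    (hstrconv : ∀ x y, 𝓛 x + ⟪gradL x, y - x⟫ + μc / 2 * ‖y - x‖ ^ 2 ≤ 𝓛 y)
    (θstar : EuclideanSpace ℝ (Fin N)) (hθstar : ∀ x, 𝓛 θstar ≤ 𝓛 x)
    (τ : ℕ → ℝ) (hτpos : ∀ k, 0 < τ k)
    (θ v : ℕ → Ωp → EuclideanSpace ℝ (Fin N))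
    (hθmeas : ∀ k, Measurable (θ k)) (hvmeas : ∀ k, Measurable (v k))
    (θ0 v0 : EuclideanSpace ℝ (Fin N)) (hθ0 : ∀ ω, θ 0 ω = θ0) (hv0 : ∀ ω, v 0 ω = v0)
    (hsub0 : ESubgradAt (elasticNet J δ) v0 θ0)
    (hvrec : ∀ k ω, v (k + 1) ω = v k ω - τ k • g (θ k ω) (X k ω))
    (hθrec : ∀ k ω, ∀ t : EuclideanSpace ℝ (Fin N),
      ((‖θ (k + 1) ω - δ • v (k + 1) ω‖ ^ 2 / (2 * δ) : ℝ) : EReal) + J (θ (k + 1) ω)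
        ≤ ((‖t - δ • v (k + 1) ω‖ ^ 2 / (2 * δ) : ℝ) : EReal) + J t)
    (hLint : ∀ k, Integrable (fun ω => 𝓛 (θ k ω)) P)
    (hDint : ∀ k, Integrable (fun ω =>
      DBregSym J (v k ω - δ⁻¹ • θ k ω) (v (k + 1) ω - δ⁻¹ • θ (k + 1) ω)
        (θ (k + 1) ω) (θ k ω)) P)
    (hNint : ∀ k, Integrable (fun ω => ‖θ (k + 1) ω - θ k ω‖ ^ 2) P)
    (hdint : ∀ k, Integrable (fun ω => DBreg (elasticNet J δ) (v k ω) θstar (θ k ω)) P)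
    (hN2int : ∀ k, Integrable (fun ω => ‖θstar - θ k ω‖ ^ 2) P)
    (hτle : ∀ k, τ k ≤ μc / (2 * δ * L ^ 2))
    (hτmono : ∀ k, τ (k + 1) ≤ τ k) (hτsq : Summable (fun k => (τ k) ^ 2))
    (hτns : ¬ Summable τ) :
    Tendsto (fun k => ∫ ω, DBreg (elasticNet J δ) (v k ω) θstar (θ k ω) ∂P)
      atTop (nhds 0) ∧
    Tendsto (fun k => ∫ ω, ‖θstar - θ k ω‖ ^ 2 ∂P) atTop (nhds 0) := by
  classical
  -- basic measurability
  have hgradLmeas : Measurable gradL := by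
    have hlip : LipschitzWith (Real.toNNReal L) gradL := by
      apply LipschitzWith.of_dist_le_mul
      intro x y
      rw [dist_eq_norm, dist_eq_norm]
      calc ‖gradL x - gradL y‖ ≤ L * ‖x - y‖ := hLip x y
      _ = (Real.toNNReal L : ℝ) * ‖x - y‖ := by rw [Real.coe_toNNReal _ hL.le]
    exact hlip.continuous.measurable
  -- real form of the elastic net
  have hJδ : ∀ x : EuclideanSpace ℝ (Fin N),
      (elasticNet J δ x).toReal = slbL1 x + ‖x‖ ^ 2 / (2*δ) := by
    intro x
    rw [elasticNet, hJ x, ← EReal.coe_add, EReal.toReal_coe, slbL1_def]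
  -- the M property: θ k ω minimizes the prox objective for v k ω
  have hMprop : ∀ k ω t, ‖θ k ω - δ • v k ω‖ ^ 2 / (2*δ) + slbL1 (θ k ω)
      ≤ ‖t - δ • v k ω‖ ^ 2 / (2*δ) + slbL1 t := by
    intro k ω t
    obtain _ | k := k
    · rw [hθ0, hv0]
      have h := hsub0 t
      rw [elasticNet, elasticNet, hJ, hJ, ← EReal.coe_add, ← EReal.coe_add,
        ← EReal.coe_add] at h
      have h' := EReal.coe_le_coe_iff.mp h
      rw [slb_expand hδ θ0 v0, slb_expand hδ t v0, slbL1_def, slbL1_def]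
      rw [inner_sub_right] at h'
      have h2 : (2:ℝ) * δ = 2 * δ := rfl
      linarith [h']
    · have h := hθrec k ω t
      rw [hJ, hJ, ← EReal.coe_add, ← EReal.coe_add] at h
      have h' := EReal.coe_le_coe_iff.mp h
      rw [slbL1_def, slbL1_def]
      exact h'
  have hstarineq : ∀ k ω t, slbL1 (θ k ω) + ⟪v k ω - δ⁻¹ • θ k ω, t - θ k ω⟫
      ≤ slbL1 t + ‖t - θ k ω‖ ^ 2 / (2*δ) :=
    fun k ω => slb_M_to_star hδ (hMprop k ω)
  have hJ1sub : ∀ k ω u, slbL1 (θ k ω) + ⟪v k ω - δ⁻¹ • θ k ω, u - θ k ω⟫ ≤ slbL1 u :=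
    fun k ω => slb_scale hδ (hstarineq k ω)
  have hSG : ∀ k ω t, (slbL1 (θ k ω) + ‖θ k ω‖ ^ 2/(2*δ)) + ⟪v k ω, t - θ k ω⟫
      + ‖t - θ k ω‖ ^ 2/(2*δ) ≤ slbL1 t + ‖t‖ ^ 2/(2*δ) :=
    fun k ω => slb_SG hδ (hJ1sub k ω)
  -- the Bregman distance as a real function
  set D : ℕ → Ωp → ℝ := fun k ω => slbD δ θstar (θ k ω) (v k ω) with hDdef
  have hDeq : ∀ k ω, DBreg (elasticNet J δ) (v k ω) θstar (θ k ω) = D k ω := by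
    intro k ω
    rw [DBreg, hJδ, hJδ, hDdef]
    rfl
  have hDkint : ∀ k, Integrable (D k) P :=
    fun k => (hdint k).congr (Filter.Eventually.of_forall (fun ω => hDeq k ω))
  -- lower bound
  have hlow : ∀ k ω, ‖θstar - θ k ω‖ ^ 2 / (2*δ) ≤ D k ω :=
    fun k ω => slbD_lower (hSG k ω θstar)
  have hDnonneg : ∀ k ω, 0 ≤ D k ω := by
    intro k ω
    have h1 := hlow k ω
    have h2 : (0:ℝ) ≤ ‖θstar - θ k ω‖ ^ 2 / (2*δ) := by positivity
    exact le_trans h2 h1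
  -- gradient vanishes at the minimizer
  have hgrad0 : gradL θstar = 0 := by
    have h1 := hasGradientAt_iff_hasFDerivAt.mp (hgrad θstar)
    have h2 : IsLocalMin 𝓛 θstar := Filter.Eventually.of_forall (fun x => hθstar x)
    have h3 := h2.hasFDerivAt_eq_zero h1
    have h4 : InnerProductSpace.toDual ℝ (EuclideanSpace ℝ (Fin N)) (gradL θstar)
        = InnerProductSpace.toDual ℝ (EuclideanSpace ℝ (Fin N)) 0 := by
      rw [h3]; simp
    exact (InnerProductSpace.toDual ℝ (EuclideanSpace ℝ (Fin N))).injective h4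
  have hgradbd : ∀ x, ‖gradL x‖ ≤ L * ‖θstar - x‖ := by
    intro x
    have h := hLip x θstar
    rw [hgrad0, sub_zero, norm_sub_rev] at h
    exact h
  -- identification of the iterates with the deterministic recursion
  haveI hΩne : Nonempty Ω := by
    by_contra h
    rw [not_nonempty_iff] at h
    have h1 : μ Set.univ = 1 := measure_univ
    rw [Set.univ_eq_empty_iff.mpr h, measure_empty] at h1
    simp at h1
  have hIter : ∀ k ω, (θ k ω, v k ω) = slbIter g τ δ θ0 v0 k (fun i => X i ω) := by
    intro k
    induction k with
    | zero => intro ω; rw [hθ0, hv0]; rfl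
    | succ k ih =>
      intro ω
      have ih1 : θ k ω = (slbIter g τ δ θ0 v0 k (fun i => X i ω)).1 :=
        congrArg Prod.fst (ih ω)
      have ih2 : v k ω = (slbIter g τ δ θ0 v0 k (fun i => X i ω)).2 :=
        congrArg Prod.snd (ih ω)
      have hv' : v (k+1) ω = (slbIter g τ δ θ0 v0 k (fun i => X i ω)).2
          - τ k • g (slbIter g τ δ θ0 v0 k (fun i => X i ω)).1 (X k ω) := by
        rw [hvrec k ω, ← ih1, ← ih2]
      have hθ' : θ (k+1) ω = slbST δ (δ • v (k+1) ω) :=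
        slb_prox_unique hδ (hMprop (k+1) ω) (fun t => slbST_min hδ (δ • v (k+1) ω) t)
      show (θ (k+1) ω, v (k+1) ω) = _
      rw [slbIter]
      refine Prod.ext ?_ ?_
      · simp only
        rw [hθ', hv']
      · simp only
        exact hv'
  have hindep : ∀ k, ProbabilityTheory.IndepFun (θ k) (X k) P := by
    intro k
    set Φ : (↑(Finset.range k) → Ω) → EuclideanSpace ℝ (Fin N) := fun u =>
      (slbIter g τ δ θ0 v0 k
        (fun i => if h : i ∈ Finset.range k then u ⟨i, h⟩ else Classical.arbitrary Ω)).1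
      with hΦdef
    have hext : Measurable fun (u : ↑(Finset.range k) → Ω) (i : ℕ) =>
        if h : i ∈ Finset.range k then u ⟨i, h⟩ else Classical.arbitrary Ω := by
      refine measurable_pi_lambda _ (fun i => ?_)
      by_cases h : i ∈ Finset.range k
      · simpa [h] using measurable_pi_apply (⟨i, h⟩ : ↑(Finset.range k))
      · simpa [h] using measurable_const
    have hΦ : Measurable Φ :=
      measurable_fst.comp ((slbIter_measurable hgmeas τ δ θ0 v0 k).comp hext)
    apply slb_indep X hXmeas hXindep k Φ hΦ
    intro ω
    rw [hΦdef]
    simp only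
    have hloc := slbIter_local g τ δ θ0 v0 k (fun i => X i ω)
      (fun i => if h : i ∈ Finset.range k then X i ω else Classical.arbitrary Ω)
      (fun i hi => by simp [Finset.mem_range.mpr hi])
    rw [← hloc]
    exact congrArg Prod.fst (hIter k ω)
  -- the stochastic gradient process
  set G : ℕ → Ωp → EuclideanSpace ℝ (Fin N) := fun k ω => g (θ k ω) (X k ω) with hGdef
  have hGmeas : ∀ k, Measurable (G k) :=
    fun k => hgmeas.comp ((hθmeas k).prodMk (hXmeas k))
  -- variance bound
  have hvarlint : ∀ k, (∫⁻ ω, ENNReal.ofReal (‖G k ω - gradL (θ k ω)‖ ^ 2) ∂P)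
      ≤ ENNReal.ofReal (σ ^ 2) := by
    intro k
    have hFm : Measurable fun z : EuclideanSpace ℝ (Fin N) × Ω =>
        ENNReal.ofReal (‖g z.1 z.2 - gradL z.1‖ ^ 2) := by
      apply ENNReal.measurable_ofReal.comp
      exact ((hgmeas.sub (hgradLmeas.comp measurable_fst)).norm.pow measurable_const)
    have h := slb_transfer_lint P μ (hθmeas k) (hXmeas k) (hindep k) (hXdist k) _ hFm
    calc (∫⁻ ω, ENNReal.ofReal (‖G k ω - gradL (θ k ω)‖ ^ 2) ∂P)
        = ∫⁻ ω, ∫⁻ w, ENNReal.ofReal (‖g (θ k ω) w - gradL (θ k ω)‖ ^ 2) ∂μ ∂P := h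
    _ ≤ ∫⁻ _, ENNReal.ofReal (σ ^ 2) ∂P := by
        refine lintegral_mono (fun ω => ?_)
        rw [← ofReal_integral_eq_lintegral_ofReal (hvarint (θ k ω))
          (Filter.Eventually.of_forall (fun w => sq_nonneg _))]
        exact ENNReal.ofReal_le_ofReal (hvar (θ k ω))
    _ = ENNReal.ofReal (σ ^ 2) := by simp
  have hG2int : ∀ k, Integrable (fun ω => ‖G k ω - gradL (θ k ω)‖ ^ 2) P := by
    intro k
    refine ⟨(((hGmeas k).sub (hgradLmeas.comp (hθmeas k))).norm.pow
      measurable_const).aestronglyMeasurable, ?_⟩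
    rw [hasFiniteIntegral_iff_ofReal (Filter.Eventually.of_forall (fun ω => sq_nonneg _))]
    exact lt_of_le_of_lt (hvarlint k) ENNReal.ofReal_lt_top
  have hvarE : ∀ k, ∫ ω, ‖G k ω - gradL (θ k ω)‖ ^ 2 ∂P ≤ σ ^ 2 := by
    intro k
    rw [integral_eq_lintegral_of_nonneg_ae (Filter.Eventually.of_forall (fun ω => sq_nonneg _))
      (hG2int k).1]
    exact ENNReal.toReal_le_of_le_ofReal (sq_nonneg σ) (hvarlint k)
  -- cross term vanishes
  have hcrossmeas : ∀ k, Measurable fun ω =>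
      ⟪G k ω - gradL (θ k ω), θstar - θ k ω⟫ := by
    intro k
    exact ((hGmeas k).sub (hgradLmeas.comp (hθmeas k))).inner
      (measurable_const.sub (hθmeas k))
  have hinnerbd : ∀ (u w : EuclideanSpace ℝ (Fin N)), |⟪u, w⟫| ≤ (‖u‖^2 + ‖w‖^2)/2 := by
    intro u w
    have h1 := abs_real_inner_le_norm u w
    nlinarith [sq_nonneg (‖u‖ - ‖w‖)]
  have hcrossint : ∀ k, Integrable (fun ω =>
      ⟪G k ω - gradL (θ k ω), θstar - θ k ω⟫) P := by
    intro k
    refine Integrable.mono' (((hG2int k).add (hN2int k)).div_const 2)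
      (hcrossmeas k).aestronglyMeasurable
      (Filter.Eventually.of_forall (fun ω => ?_))
    rw [Real.norm_eq_abs]
    have hb := hinnerbd (G k ω - gradL (θ k ω)) (θstar - θ k ω)
    simpa [Pi.add_apply] using hb
  have hcross : ∀ k, ∫ ω, ⟪G k ω - gradL (θ k ω), θstar - θ k ω⟫ ∂P = 0 := by
    intro k
    have hFm : Measurable fun z : EuclideanSpace ℝ (Fin N) × Ω =>
        ⟪g z.1 z.2 - gradL z.1, θstar - z.1⟫ :=
      (hgmeas.sub (hgradLmeas.comp measurable_fst)).inner
        (measurable_const.sub measurable_fst)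
    have hz : ∀ x : EuclideanSpace ℝ (Fin N),
        ∫ w, ⟪g x w - gradL x, θstar - x⟫ ∂μ = 0 := by
      intro x
      calc ∫ w, ⟪g x w - gradL x, θstar - x⟫ ∂μ
          = ∫ w, ⟪θstar - x, g x w - gradL x⟫ ∂μ := by
            simp_rw [real_inner_comm]
      _ = ⟪θstar - x, ∫ w, (g x w - gradL x) ∂μ⟫ :=
            integral_inner ((hgint x).sub (integrable_const _)) _
      _ = 0 := by
            rw [integral_sub (hgint x) (integrable_const _), integral_const,
              probReal_univ, one_smul, hunbiased, sub_self,
              inner_zero_right]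
    calc ∫ ω, ⟪G k ω - gradL (θ k ω), θstar - θ k ω⟫ ∂P
        = ∫ ω, ∫ w, ⟪g (θ k ω) w - gradL (θ k ω), θstar - θ k ω⟫ ∂μ ∂P :=
          slb_transfer_eq P μ (hθmeas k) (hXmeas k) (hindep k) (hXdist k) _ hFm
            (hcrossint k)
    _ = 0 := by simp only [hz, integral_zero]
  -- strong convexity term
  have hstrpt : ∀ k ω, ⟪gradL (θ k ω), θstar - θ k ω⟫
      ≤ -(μc/2) * ‖θstar - θ k ω‖ ^ 2 := by
    intro k ω
    have h1 := hstrconv (θ k ω) θstar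
    have h2 := hθstar (θ k ω)
    linarith
  have hstrmeas : ∀ k, Measurable fun ω => ⟪gradL (θ k ω), θstar - θ k ω⟫ :=
    fun k => (hgradLmeas.comp (hθmeas k)).inner (measurable_const.sub (hθmeas k))
  have hstrint : ∀ k, Integrable (fun ω => ⟪gradL (θ k ω), θstar - θ k ω⟫) P := by
    intro k
    refine Integrable.mono' ((hN2int k).const_mul L)
      (hstrmeas k).aestronglyMeasurable
      (Filter.Eventually.of_forall (fun ω => ?_))
    rw [Real.norm_eq_abs]
    calc |⟪gradL (θ k ω), θstar - θ k ω⟫| ≤ ‖gradL (θ k ω)‖ * ‖θstar - θ k ω‖ :=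
          abs_real_inner_le_norm _ _
    _ ≤ (L * ‖θstar - θ k ω‖) * ‖θstar - θ k ω‖ :=
          mul_le_mul_of_nonneg_right (hgradbd (θ k ω)) (norm_nonneg _)
    _ = L * ‖θstar - θ k ω‖ ^ 2 := by ring
  -- squared norm of the stochastic gradient
  have hGsqpt : ∀ k ω, ‖G k ω‖ ^ 2 ≤ 3 * ‖G k ω - gradL (θ k ω)‖ ^ 2
      + (3/2) * L ^ 2 * ‖θstar - θ k ω‖ ^ 2 := by
    intro k ω
    have h1 : ‖G k ω‖ ≤ ‖G k ω - gradL (θ k ω)‖ + ‖gradL (θ k ω)‖ := by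
      have h0 : G k ω = (G k ω - gradL (θ k ω)) + gradL (θ k ω) := by abel
      calc ‖G k ω‖ = ‖(G k ω - gradL (θ k ω)) + gradL (θ k ω)‖ := congrArg norm h0
      _ ≤ _ := norm_add_le _ _
    have h2 := hgradbd (θ k ω)
    have h3 : ‖G k ω‖ ≤ ‖G k ω - gradL (θ k ω)‖ + L * ‖θstar - θ k ω‖ := by linarith
    nlinarith [norm_nonneg (G k ω), norm_nonneg (G k ω - gradL (θ k ω)),
      norm_nonneg (θstar - θ k ω),
      sq_nonneg (‖G k ω - gradL (θ k ω)‖ - (L * ‖θstar - θ k ω‖)/2 * 2),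
      sq_nonneg (2 * ‖G k ω - gradL (θ k ω)‖ - L * ‖θstar - θ k ω‖),
      mul_nonneg (norm_nonneg (G k ω - gradL (θ k ω))) (norm_nonneg (θstar - θ k ω)),
      mul_pos hL hL]
  have hGsqint : ∀ k, Integrable (fun ω => ‖G k ω‖ ^ 2) P := by
    intro k
    refine Integrable.mono' (((hG2int k).const_mul 3).add
      ((hN2int k).const_mul ((3/2) * L ^ 2)))
      ((hGmeas k).norm.pow measurable_const).aestronglyMeasurable
      (Filter.Eventually.of_forall (fun ω => ?_))
    rw [Real.norm_eq_abs, abs_of_nonneg (sq_nonneg _)]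
    exact hGsqpt k ω
  -- expectations
  set aa : ℕ → ℝ := fun k => ∫ ω, ‖θstar - θ k ω‖ ^ 2 ∂P with haadef
  set dd : ℕ → ℝ := fun k => ∫ ω, D k ω ∂P with hdddef
  have haann : ∀ k, 0 ≤ aa k := fun k => integral_nonneg (fun ω => sq_nonneg _)
  have hdd0 : ∀ k, 0 ≤ dd k := fun k => integral_nonneg (fun ω => hDnonneg k ω)
  have hstrE : ∀ k, ∫ ω, ⟪gradL (θ k ω), θstar - θ k ω⟫ ∂P ≤ -(μc/2) * aa k := by
    intro k
    calc ∫ ω, ⟪gradL (θ k ω), θstar - θ k ω⟫ ∂P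
        ≤ ∫ ω, -(μc/2) * ‖θstar - θ k ω‖ ^ 2 ∂P :=
          integral_mono (hstrint k) ((hN2int k).const_mul _) (hstrpt k)
    _ = -(μc/2) * aa k := by rw [integral_const_mul]
  have hGsqE : ∀ k, ∫ ω, ‖G k ω‖ ^ 2 ∂P ≤ 3 * σ ^ 2 + (3/2) * L ^ 2 * aa k := by
    intro k
    calc ∫ ω, ‖G k ω‖ ^ 2 ∂P
        ≤ ∫ ω, (3 * ‖G k ω - gradL (θ k ω)‖ ^ 2
            + (3/2) * L ^ 2 * ‖θstar - θ k ω‖ ^ 2) ∂P :=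
          integral_mono (hGsqint k) (((hG2int k).const_mul 3).add
            ((hN2int k).const_mul _)) (hGsqpt k)
    _ = 3 * (∫ ω, ‖G k ω - gradL (θ k ω)‖ ^ 2 ∂P) + (3/2) * L ^ 2 * aa k := by
          rw [integral_add ((hG2int k).const_mul 3) ((hN2int k).const_mul _),
            integral_const_mul, integral_const_mul]
    _ ≤ 3 * σ ^ 2 + (3/2) * L ^ 2 * aa k := by
          have := hvarE k
          nlinarith [hvarE k]
  -- pathwise recursion, integrated
  have hpath : ∀ k ω, D (k+1) ω ≤ D k ω + τ k * ⟪G k ω, θstar - θ k ω⟫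
      + (δ * τ k ^ 2/2) * ‖G k ω‖ ^ 2 := by
    intro k ω
    have hv1 := hvrec k ω
    rw [hDdef]
    simp only
    rw [hv1]
    exact slbD_pathwise hδ (hSG k ω (θ (k+1) ω))
  have hsplitpt : ∀ k ω, ⟪G k ω, θstar - θ k ω⟫
      = ⟪G k ω - gradL (θ k ω), θstar - θ k ω⟫
        + ⟪gradL (θ k ω), θstar - θ k ω⟫ := by
    intro k ω
    rw [inner_sub_left]
    ring
  have hinner_int : ∀ k, Integrable (fun ω => ⟪G k ω, θstar - θ k ω⟫) P :=
    fun k => ((hcrossint k).add (hstrint k)).congr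
      (Filter.Eventually.of_forall (fun ω => (hsplitpt k ω).symm))
  have hinnerE : ∀ k, ∫ ω, ⟪G k ω, θstar - θ k ω⟫ ∂P ≤ -(μc/2) * aa k := by
    intro k
    rw [integral_congr_ae (Filter.Eventually.of_forall (hsplitpt k)),
      integral_add (hcrossint k) (hstrint k), hcross k, zero_add]
    exact hstrE k
  have hrecE : ∀ k, dd (k+1) ≤ dd k - (μc/8) * (τ k * aa k) + ((3*δ/2) * σ ^ 2) * τ k ^ 2 := by
    intro k
    have hτ2 : τ k * (2 * δ * L ^ 2) ≤ μc := by
      have h := hτle k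
      rw [le_div_iff₀ (by positivity : (0:ℝ) < 2 * δ * L ^ 2)] at h
      exact h
    have h1 : dd (k+1) ≤ ∫ ω, (D k ω + τ k * ⟪G k ω, θstar - θ k ω⟫
        + (δ * τ k ^ 2/2) * ‖G k ω‖ ^ 2) ∂P :=
      integral_mono (hDkint (k+1)) (((hDkint k).add
        ((hinner_int k).const_mul (τ k))).add ((hGsqint k).const_mul _)) (hpath k)
    have i1 : Integrable (fun ω => D k ω + τ k * ⟪G k ω, θstar - θ k ω⟫) P :=
      (hDkint k).add ((hinner_int k).const_mul (τ k))
    have i2 : Integrable (fun ω => (δ * τ k ^ 2/2) * ‖G k ω‖ ^ 2) P :=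
      (hGsqint k).const_mul _
    have i3 : Integrable (fun ω => τ k * ⟪G k ω, θstar - θ k ω⟫) P :=
      (hinner_int k).const_mul (τ k)
    have h2 : ∫ ω, (D k ω + τ k * ⟪G k ω, θstar - θ k ω⟫
        + (δ * τ k ^ 2/2) * ‖G k ω‖ ^ 2) ∂P
        = dd k + τ k * (∫ ω, ⟪G k ω, θstar - θ k ω⟫ ∂P)
          + (δ * τ k ^ 2/2) * (∫ ω, ‖G k ω‖ ^ 2 ∂P) := by
      rw [integral_add i1 i2, integral_add (hDkint k) i3,
        integral_const_mul, integral_const_mul]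
    rw [h2] at h1
    have h3 : τ k * (∫ ω, ⟪G k ω, θstar - θ k ω⟫ ∂P) ≤ τ k * (-(μc/2) * aa k) :=
      mul_le_mul_of_nonneg_left (hinnerE k) (hτpos k).le
    have h4 : (δ * τ k ^ 2/2) * (∫ ω, ‖G k ω‖ ^ 2 ∂P)
        ≤ (δ * τ k ^ 2/2) * (3 * σ ^ 2 + (3/2) * L ^ 2 * aa k) :=
      mul_le_mul_of_nonneg_left (hGsqE k) (by positivity)
    have key : (δ * τ k ^ 2/2) * ((3/2) * L ^ 2 * aa k) ≤ (3*μc/8) * (τ k * aa k) := by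
      nlinarith [mul_le_mul_of_nonneg_right hτ2
        (mul_nonneg (hτpos k).le (haann k)), haann k, (hτpos k).le]
    nlinarith [h1, h3, h4, key]
  -- bound dd by aa
  have haKE : ∀ k, aa k ≤ (2*δ) * dd k := by
    intro k
    have hpt : ∀ ω, ‖θstar - θ k ω‖ ^ 2 ≤ (2*δ) * D k ω := by
      intro ω
      have h := hlow k ω
      rw [div_le_iff₀ (by positivity : (0:ℝ) < 2*δ)] at h
      linarith
    calc aa k ≤ ∫ ω, (2*δ) * D k ω ∂P :=
          integral_mono (hN2int k) ((hDkint k).const_mul _) hpt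
    _ = (2*δ) * dd k := by rw [integral_const_mul]
  have hboundE : ∀ ε : ℝ, 0 < ε → ∃ M : ℝ, 0 < M ∧ ∀ k, dd k ≤ ε + M * aa k := by
    intro ε hε
    refine ⟨((N:ℝ)+1)/ε + 1/(2*δ), by positivity, fun k => ?_⟩
    have hpt : ∀ ω, D k ω ≤ ε + (((N:ℝ)+1)/ε + 1/(2*δ)) * ‖θstar - θ k ω‖ ^ 2 := by
      intro ω
      have h1 := slbD_upper hδ (hJ1sub k ω ((2:ℝ) • (θ k ω) - θstar))
      have h2 := slb_sum_bound (θstar - θ k ω) hε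
      have h3 : (∑ i, 2*|θstar i - θ k ω i|) = ∑ i, 2*|(θstar - θ k ω) i| := by
        refine Finset.sum_congr rfl (fun i _ => ?_)
        rfl
      rw [hDdef]
      simp only
      calc slbD δ θstar (θ k ω) (v k ω)
          ≤ (∑ i, 2*|θstar i - θ k ω i|) + ‖θstar - θ k ω‖ ^ 2/(2*δ) := h1
      _ = (∑ i, 2*|(θstar - θ k ω) i|) + ‖θstar - θ k ω‖ ^ 2/(2*δ) := by rw [h3]
      _ ≤ (ε + (((N:ℝ)+1)/ε) * ‖θstar - θ k ω‖ ^ 2) + ‖θstar - θ k ω‖ ^ 2/(2*δ) := by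
          linarith [h2]
      _ = ε + (((N:ℝ)+1)/ε + 1/(2*δ)) * ‖θstar - θ k ω‖ ^ 2 := by ring
    calc dd k ≤ ∫ ω, (ε + (((N:ℝ)+1)/ε + 1/(2*δ)) * ‖θstar - θ k ω‖ ^ 2) ∂P :=
          integral_mono (hDkint k) ((integrable_const ε).add
            ((hN2int k).const_mul _)) hpt
    _ = ε + (((N:ℝ)+1)/ε + 1/(2*δ)) * aa k := by
          rw [integral_add (integrable_const ε) ((hN2int k).const_mul _),
            integral_const, integral_const_mul, probReal_univ,
            one_smul]
  -- conclusion
  obtain ⟨hdlim, halim⟩ := slb_conv_lemma dd aa τ hdd0 haann (μc/8) ((3*δ/2) * σ ^ 2)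
    (2*δ) (by positivity) (by positivity) (by positivity) hrecE hτpos hτsq hτns
    hboundE haKE
  constructor
  · have he : (fun k => ∫ ω, DBreg (elasticNet J δ) (v k ω) θstar (θ k ω) ∂P) = dd := by
      funext k
      exact integral_congr_ae (Filter.Eventually.of_forall (fun ω => hDeq k ω))
    rw [he]
    exact hdlim
  · exact halim
end
end

section
/- Non-convergence to a critical point: let 𝓛(θ) = (θ + 1)² on ℝ, let J = χ_{[0,∞)} be the characteristic function of the nonnegative half-line (J(θ) = 0 for θ ≥ 0 and J(θ) = +∞ for θ < 0), and let δ > 0 and τ > 0 be arbitrary. Consider the deterministic linearized Bregman iterations: θ^(k) := max(δ v^(k), 0) (the proximal step, which here is projection onto [0, ∞)) and v^(k+1) := v^(k) − τ 𝓛′(θ^(k)) = v^(k) − 2τ(θ^(k) + 1), started from any v^(0) ∈ ℝ. Then θ^(k) → 0 as k → ∞ (indeed θ^(k) = 0 for all sufficiently large k), although θ = 0 is not a critical point of 𝓛; the only critical point θ* = −1 satisfies J(θ*) = +∞. -/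
open MeasureTheory Filter
open scoped RealInnerProductSpace ENNReal Topology

noncomputable section

/-- **Non-convergence to a critical point.** -/
theorem linBreg_nonconvergence_to_critical_point
    (𝓛 : ℝ → ℝ) (h𝓛 : ∀ x, 𝓛 x = (x + 1) ^ 2)
    (J : ℝ → EReal) (hJ : ∀ x : ℝ, J x = if 0 ≤ x then (0 : EReal) else ⊤)
    (δ τ : ℝ) (hδ : 0 < δ) (hτ : 0 < τ)
    (v θ : ℕ → ℝ)
    (hθ : ∀ k, θ k = max (δ * v k) 0)
    (hv : ∀ k, v (k + 1) = v k - 2 * τ * (θ k + 1)) :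
    Tendsto θ atTop (nhds 0) ∧
    (∃ K : ℕ, ∀ k ≥ K, θ k = 0) ∧
    deriv 𝓛 0 ≠ 0 ∧
    (∀ x : ℝ, deriv 𝓛 x = 0 → x = -1) ∧
    J (-1) = ⊤ := by
  have hθnn : ∀ k, 0 ≤ θ k := fun k => by rw [hθ]; exact le_max_right _ _
  have hstep : ∀ k, v (k + 1) ≤ v k - 2 * τ := by
    intro k
    rw [hv]
    have : 2 * τ ≤ 2 * τ * (θ k + 1) := by nlinarith [hθnn k]
    linarith
  have hbound : ∀ k, v k ≤ v 0 - 2 * τ * k := by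
    intro k
    induction k with
    | zero => simp
    | succ n ih =>
      have := hstep n
      push_cast
      nlinarith
  obtain ⟨K, hK⟩ := exists_nat_ge (v 0 / (2 * τ))
  have hvK : ∀ k ≥ K, v k ≤ 0 := by
    intro k hk
    have h1 : v 0 ≤ 2 * τ * K := by
      rw [div_le_iff₀ (by linarith) ] at hK; linarith
    have h2 : (K : ℝ) ≤ k := by exact_mod_cast hk
    have := hbound k
    nlinarith
  have hθ0 : ∀ k ≥ K, θ k = 0 := by
    intro k hk
    rw [hθ]
    have : δ * v k ≤ 0 := mul_nonpos_of_nonneg_of_nonpos hδ.le (hvK k hk)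
    exact max_eq_right this
  have hderiv : ∀ x : ℝ, deriv 𝓛 x = 2 * (x + 1) := by
    intro x
    have : 𝓛 = fun x => (x + 1) ^ 2 := funext h𝓛
    rw [this]
    have : HasDerivAt (fun x : ℝ => (x + 1) ^ 2) (2 * (x + 1)) x := by
      have h := ((hasDerivAt_id x).add_const 1).fun_pow 2
      simpa [mul_comm] using h
    exact this.deriv
  refine ⟨?_, ⟨K, hθ0⟩, ?_, ?_, ?_⟩
  · exact tendsto_atTop_of_eventually_const hθ0
  · rw [hderiv]; norm_num
  · intro x hx; rw [hderiv] at hx; linarith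
  · rw [hJ]; norm_num
end
end

section
/- Deterministic loss decay for linearized Bregman iterations: let Θ be a real Hilbert space, 𝓛 : Θ → ℝ Fréchet differentiable and bounded below with ∇𝓛 L-Lipschitz (L > 0), J : Θ → (−∞, ∞] convex, proper and lower semicontinuous, δ > 0, and step sizes τ^(k) > 0. Define the deterministic linearized Bregman iterates from an initial pair θ^(0), v^(0) with v^(0) ∈ ∂J_δ(θ^(0)) by v^(k+1) := v^(k) − τ^(k) ∇𝓛(θ^(k)), and θ^(k+1) the unique minimizer over θ of (1/(2δ))‖θ − δ v^(k+1)‖² + J(θ). Then for every k: 𝓛(θ^(k+1)) + (1/τ^(k)) D_J^sym(θ^(k+1), θ^(k)) + ((2 − Lδτ^(k))/(2δτ^(k))) ‖θ^(k+1) − θ^(k)‖² ≤ 𝓛(θ^(k)), where the symmetric Bregman distance is taken with respect to the subgradients p^(k) := v^(k) − (1/δ)θ^(k) ∈ ∂J(θ^(k)) and p^(k+1) := v^(k+1) − (1/δ)θ^(k+1) ∈ ∂J(θ^(k+1)). In particular, if τ^(k) ≤ 2/(δL) for all k, then the loss decreases monotonically: 𝓛(θ^(k+1)) ≤ 𝓛(θ^(k)).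 -/
open MeasureTheory Filter
open scoped RealInnerProductSpace ENNReal Topology

noncomputable section

section Helpers

variable {Θ : Type*} [NormedAddCommGroup Θ] [InnerProductSpace ℝ Θ]

/-- The descent lemma for a function with `L`-Lipschitz gradient. -/
lemma descent_lemma [CompleteSpace Θ]
    (𝓛 : Θ → ℝ) (gradL : Θ → Θ) (hgrad : ∀ x, HasGradientAt 𝓛 (gradL x) x)
    (L : ℝ) (hLip : ∀ x y : Θ, ‖gradL x - gradL y‖ ≤ L * ‖x - y‖) (x y : Θ) :
    𝓛 y ≤ 𝓛 x + ⟪gradL x, y - x⟫ + L / 2 * ‖y - x‖ ^ 2 := by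
  set d := y - x with hd
  have hline : ∀ t : ℝ, HasDerivAt (fun t : ℝ => x + t • d) d t := by
    intro t
    simpa using ((hasDerivAt_id t).smul_const d).const_add x
  have hg : ∀ t : ℝ, HasDerivAt (fun t : ℝ => 𝓛 (x + t • d)) ⟪gradL (x + t • d), d⟫ t := by
    intro t
    have h1 := (hgrad (x + t • d)).hasFDerivAt.comp_hasDerivAt t (hline t)
    simpa [InnerProductSpace.toDual_apply_apply, Function.comp_def] using h1
  set φ : ℝ → ℝ := fun t => 𝓛 (x + t • d) - t * ⟪gradL x, d⟫ - t ^ 2 * (L / 2 * ‖d‖ ^ 2) with hφdef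
  have hφ : ∀ t : ℝ, HasDerivAt φ
      (⟪gradL (x + t • d), d⟫ - ⟪gradL x, d⟫ - 2 * t * (L / 2 * ‖d‖ ^ 2)) t := by
    intro t
    have h2 : HasDerivAt (fun t : ℝ => t * ⟪gradL x, d⟫) ⟪gradL x, d⟫ t := by
      simpa using (hasDerivAt_id t).mul_const ⟪gradL x, d⟫
    have h3 : HasDerivAt (fun t : ℝ => t ^ 2 * (L / 2 * ‖d‖ ^ 2)) (2 * t * (L / 2 * ‖d‖ ^ 2)) t := by
      simpa using (hasDerivAt_pow 2 t).mul_const (L / 2 * ‖d‖ ^ 2)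
    exact ((hg t).sub h2).sub h3
  have hanti : AntitoneOn φ (Set.Icc (0:ℝ) 1) := by
    apply antitoneOn_of_deriv_nonpos (convex_Icc 0 1)
    · exact fun t _ => ((hφ t).differentiableAt.continuousAt).continuousWithinAt
    · intro t ht
      exact (hφ t).differentiableAt.differentiableWithinAt
    · intro t ht
      rw [interior_Icc] at ht
      rw [(hφ t).deriv]
      have hcs : ⟪gradL (x + t • d) - gradL x, d⟫ ≤ ‖gradL (x + t • d) - gradL x‖ * ‖d‖ :=
        real_inner_le_norm _ _
      have hlip2 : ‖gradL (x + t • d) - gradL x‖ ≤ L * (t * ‖d‖) := by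
        have := hLip (x + t • d) x
        simpa [norm_smul, abs_of_pos ht.1, mul_assoc] using this
      have hdn : (0:ℝ) ≤ ‖d‖ := norm_nonneg _
      have hexp : ⟪gradL (x + t • d) - gradL x, d⟫ = ⟪gradL (x + t • d), d⟫ - ⟪gradL x, d⟫ := by
        rw [inner_sub_left]
      nlinarith [ht.1.le, mul_le_mul_of_nonneg_right hlip2 hdn]
  have h01 := hanti (Set.left_mem_Icc.2 zero_le_one) (Set.right_mem_Icc.2 zero_le_one) zero_le_one
  have h0 : φ 0 = 𝓛 x := by simp [hφdef]
  have h1 : φ 1 = 𝓛 y - ⟪gradL x, d⟫ - L / 2 * ‖d‖ ^ 2 := by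
    simp [hφdef, hd]
  rw [h0, h1] at h01
  linarith

lemma real_of_ne {J : Θ → EReal} (hJbot : ∀ x, J x ≠ ⊥) {a : Θ} (ha : J a ≠ ⊤) :
    ∃ r : ℝ, J a = (r : EReal) := ⟨(J a).toReal, (EReal.coe_toReal ha (hJbot a)).symm⟩

lemma fin_of_elastic_subgrad {J : Θ → EReal} (hJproper : ∃ x, J x ≠ ⊤) (hJbot : ∀ x, J x ≠ ⊥)
    {δ : ℝ} {w θ' : Θ} (h : ESubgradAt (elasticNet J δ) w θ') : J θ' ≠ ⊤ := by
  obtain ⟨x₀, hx₀⟩ := hJproper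
  obtain ⟨m, hm⟩ := real_of_ne hJbot hx₀
  intro htop
  have h1 := h x₀
  simp only [elasticNet, htop, hm] at h1
  rw [EReal.top_add_of_ne_bot (by exact_mod_cast EReal.coe_ne_bot _),
    EReal.top_add_of_ne_bot (by exact_mod_cast EReal.coe_ne_bot _), ← EReal.coe_add] at h1
  exact (EReal.coe_ne_top _) (top_le_iff.1 h1)

lemma fin_of_min {J : Θ → EReal} (hJproper : ∃ x, J x ≠ ⊤) (hJbot : ∀ x, J x ≠ ⊥)
    {δ : ℝ} {w θ' : Θ}
    (h : ∀ t : Θ, ((‖θ' - δ • w‖ ^ 2 / (2 * δ) : ℝ) : EReal) + J θ'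
        ≤ ((‖t - δ • w‖ ^ 2 / (2 * δ) : ℝ) : EReal) + J t) : J θ' ≠ ⊤ := by
  obtain ⟨x₀, hx₀⟩ := hJproper
  obtain ⟨m, hm⟩ := real_of_ne hJbot hx₀
  intro htop
  have h1 := h x₀
  rw [htop, hm, EReal.add_top_of_ne_bot (by exact_mod_cast EReal.coe_ne_bot _),
    ← EReal.coe_add] at h1
  exact (EReal.coe_ne_top _) (top_le_iff.1 h1)

lemma elastic_subgrad_of_min {J : Θ → EReal} (hJbot : ∀ x, J x ≠ ⊥)
    {δ : ℝ} (hδ : 0 < δ) {w θ' : Θ} (hfin : J θ' ≠ ⊤)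
    (h : ∀ t : Θ, ((‖θ' - δ • w‖ ^ 2 / (2 * δ) : ℝ) : EReal) + J θ'
        ≤ ((‖t - δ • w‖ ^ 2 / (2 * δ) : ℝ) : EReal) + J t) :
    ESubgradAt (elasticNet J δ) w θ' := by
  intro t
  obtain ⟨r', hr'⟩ := real_of_ne hJbot hfin
  rcases eq_or_ne (J t) ⊤ with ht | ht
  · simp only [elasticNet, ht,
      EReal.top_add_of_ne_bot (show ((‖t‖ ^ 2 / (2 * δ) : ℝ) : EReal) ≠ ⊥ from EReal.coe_ne_bot _)]
    exact le_top
  · obtain ⟨r, hrt⟩ := real_of_ne hJbot ht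
    have h1 := h t
    rw [hr', hrt, ← EReal.coe_add, ← EReal.coe_add, EReal.coe_le_coe_iff] at h1
    simp only [elasticNet, hr', hrt]
    rw [← EReal.coe_add, ← EReal.coe_add, ← EReal.coe_add, EReal.coe_le_coe_iff]
    have e1 : ‖θ' - δ • w‖ ^ 2 = ‖θ'‖ ^ 2 - 2 * (δ * ⟪θ', w⟫) + δ ^ 2 * ‖w‖ ^ 2 := by
      rw [norm_sub_sq_real, real_inner_smul_right, norm_smul]
      simp [abs_of_pos hδ, mul_pow] <;> ring
    have e2 : ‖t - δ • w‖ ^ 2 = ‖t‖ ^ 2 - 2 * (δ * ⟪t, w⟫) + δ ^ 2 * ‖w‖ ^ 2 := by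
      rw [norm_sub_sq_real, real_inner_smul_right, norm_smul]
      simp [abs_of_pos hδ, mul_pow] <;> ring
    have e3 : ⟪w, t - θ'⟫ = ⟪t, w⟫ - ⟪θ', w⟫ := by
      rw [inner_sub_right, real_inner_comm w t, real_inner_comm w θ']
    rw [e1, e2] at h1
    rw [e3]
    have hδ' : (2 : ℝ) * δ ≠ 0 := by positivity
    have es1 : (‖θ'‖ ^ 2 - 2 * (δ * ⟪θ', w⟫) + δ ^ 2 * ‖w‖ ^ 2) / (2 * δ)
        = ‖θ'‖ ^ 2 / (2 * δ) - ⟪θ', w⟫ + δ * ‖w‖ ^ 2 / 2 := by field_simp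
    have es2 : (‖t‖ ^ 2 - 2 * (δ * ⟪t, w⟫) + δ ^ 2 * ‖w‖ ^ 2) / (2 * δ)
        = ‖t‖ ^ 2 / (2 * δ) - ⟪t, w⟫ + δ * ‖w‖ ^ 2 / 2 := by field_simp
    rw [es1, es2] at h1
    linarith

lemma J_subgrad_of_elastic {J : Θ → EReal} (hJconv : EConvexOn J) (hJbot : ∀ x, J x ≠ ⊥)
    {δ : ℝ} (hδ : 0 < δ) {w θ' : Θ} (hfin : J θ' ≠ ⊤)
    (h : ESubgradAt (elasticNet J δ) w θ') :
    ESubgradAt J (w - δ⁻¹ • θ') θ' := by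
  intro t
  obtain ⟨r', hr'⟩ := real_of_ne hJbot hfin
  rcases eq_or_ne (J t) ⊤ with ht | ht
  · rw [ht]; exact le_top
  · obtain ⟨r, hrt⟩ := real_of_ne hJbot ht
    rw [hr', hrt, ← EReal.coe_add, EReal.coe_le_coe_iff]
    set d := t - θ' with hdd
    set C := ‖d‖ ^ 2 / (2 * δ) with hC
    have key : ∀ s : ℝ, s ∈ Set.Ioc (0:ℝ) 1 →
        r' + ⟪w - δ⁻¹ • θ', d⟫ ≤ r + s * C := by
      intro s hs
      have hs0 : (0:ℝ) < s := hs.1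
      have h1 := h (θ' + s • d)
      have hconv := hJconv θ' t (1 - s) s (by linarith [hs.2]) hs.1.le (by ring)
      have hcomb : (1 - s) • θ' + s • t = θ' + s • d := by rw [hdd]; module
      rw [hcomb, hr', hrt, ← EReal.coe_mul, ← EReal.coe_mul, ← EReal.coe_add] at hconv
      simp only [elasticNet, hr'] at h1
      have h2 : ((r' + ‖θ'‖ ^ 2 / (2 * δ) + ⟪w, θ' + s • d - θ'⟫ : ℝ) : EReal)
          ≤ (((1 - s) * r' + s * r + ‖θ' + s • d‖ ^ 2 / (2 * δ) : ℝ) : EReal) := by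
        calc ((r' + ‖θ'‖ ^ 2 / (2 * δ) + ⟪w, θ' + s • d - θ'⟫ : ℝ) : EReal)
            = ((r' : ℝ) : EReal) + ((‖θ'‖ ^ 2 / (2 * δ) : ℝ) : EReal)
              + ((⟪w, θ' + s • d - θ'⟫ : ℝ) : EReal) := by
              rw [← EReal.coe_add, ← EReal.coe_add]
          _ ≤ J (θ' + s • d) + ((‖θ' + s • d‖ ^ 2 / (2 * δ) : ℝ) : EReal) := h1
          _ ≤ (((1 - s) * r' + s * r : ℝ) : EReal) + ((‖θ' + s • d‖ ^ 2 / (2 * δ) : ℝ) : EReal) :=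
              add_le_add_left hconv _
          _ = _ := by rw [← EReal.coe_add]
      rw [EReal.coe_le_coe_iff] at h2
      have einner : ⟪w, θ' + s • d - θ'⟫ = s * ⟪w, d⟫ := by
        simp [real_inner_smul_right]
      have enorm : ‖θ' + s • d‖ ^ 2 = ‖θ'‖ ^ 2 + 2 * (s * ⟪θ', d⟫) + s ^ 2 * ‖d‖ ^ 2 := by
        rw [norm_add_sq_real, real_inner_smul_right, norm_smul]
        simp [mul_pow] <;> ring
      have esplit : (‖θ'‖ ^ 2 + 2 * (s * ⟪θ', d⟫) + s ^ 2 * ‖d‖ ^ 2) / (2 * δ)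
          = ‖θ'‖ ^ 2 / (2 * δ) + s * (⟪θ', d⟫ / δ) + s * (s * C) := by
        rw [hC]; field_simp
      rw [einner, enorm, esplit] at h2
      have e4 : ⟪w - δ⁻¹ • θ', d⟫ = ⟪w, d⟫ - ⟪θ', d⟫ / δ := by
        rw [inner_sub_left, real_inner_smul_left]; ring
      have h4 : s * (⟪w, d⟫ - ⟪θ', d⟫ / δ) ≤ s * ((r - r') + s * C) := by
        ring_nf; ring_nf at h2; linarith
      have h5 := (mul_le_mul_iff_right₀ hs0).1 h4
      rw [e4]; linarith
    have htend : Tendsto (fun s : ℝ => r + s * C) (𝓝[>] (0:ℝ)) (𝓝 r) := by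
      have : Tendsto (fun s : ℝ => r + s * C) (𝓝 (0:ℝ)) (𝓝 (r + 0 * C)) :=
        tendsto_const_nhds.add ((continuous_id.mul continuous_const).tendsto 0)
      simpa using this.mono_left nhdsWithin_le_nhds
    refine ge_of_tendsto htend ?_
    filter_upwards [Ioc_mem_nhdsGT_of_mem (by norm_num : (0:ℝ) ∈ Set.Ico (0:ℝ) 1)] with s hs
    exact key s hs

lemma subgrad_mono {J : Θ → EReal} (hJbot : ∀ x, J x ≠ ⊥) {p q a b : Θ}
    (ha : J a ≠ ⊤) (hb : J b ≠ ⊤) (hp : ESubgradAt J p a) (hq : ESubgradAt J q b) :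
    0 ≤ ⟪p - q, a - b⟫ := by
  obtain ⟨ra, hra⟩ := real_of_ne hJbot ha
  obtain ⟨rb, hrb⟩ := real_of_ne hJbot hb
  have h1 := hp b
  have h2 := hq a
  rw [hra, hrb, ← EReal.coe_add, EReal.coe_le_coe_iff] at h1
  rw [hra, hrb, ← EReal.coe_add, EReal.coe_le_coe_iff] at h2
  have e1 : ⟪p - q, a - b⟫ = ⟪p, a - b⟫ - ⟪q, a - b⟫ := inner_sub_left _ _ _
  have e2 : ⟪p, b - a⟫ = -⟪p, a - b⟫ := by
    rw [show b - a = -(a - b) from (neg_sub a b).symm, inner_neg_right]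
  linarith

end Helpers

/-- **Deterministic loss decay for linearized Bregman iterations.** -/
theorem det_linBreg_loss_decay
    {Θ : Type*} [NormedAddCommGroup Θ] [InnerProductSpace ℝ Θ] [CompleteSpace Θ]
    (𝓛 : Θ → ℝ) (gradL : Θ → Θ) (hgrad : ∀ x, HasGradientAt 𝓛 (gradL x) x)
    (hbdd : ∃ B : ℝ, ∀ x, B ≤ 𝓛 x)
    (L : ℝ) (hL : 0 < L) (hLip : ∀ x y : Θ, ‖gradL x - gradL y‖ ≤ L * ‖x - y‖)
    (J : Θ → EReal) (hJconv : EConvexOn J) (hJproper : ∃ x, J x ≠ ⊤)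
    (hJbot : ∀ x, J x ≠ ⊥) (hJlsc : LowerSemicontinuous J)
    (δ : ℝ) (hδ : 0 < δ)
    (τ : ℕ → ℝ) (hτpos : ∀ k, 0 < τ k)
    (θ v : ℕ → Θ)
    (hsub0 : ESubgradAt (elasticNet J δ) (v 0) (θ 0))
    (hvrec : ∀ k, v (k + 1) = v k - τ k • gradL (θ k))
    (hθrec : ∀ k, ∀ t : Θ,
      ((‖θ (k + 1) - δ • v (k + 1)‖ ^ 2 / (2 * δ) : ℝ) : EReal) + J (θ (k + 1))
        ≤ ((‖t - δ • v (k + 1)‖ ^ 2 / (2 * δ) : ℝ) : EReal) + J t) :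
    (∀ k : ℕ,
      𝓛 (θ (k + 1)) +
        (1 / τ k) * DBregSym J (v k - δ⁻¹ • θ k) (v (k + 1) - δ⁻¹ • θ (k + 1))
          (θ (k + 1)) (θ k) +
        (2 - L * δ * τ k) / (2 * δ * τ k) * ‖θ (k + 1) - θ k‖ ^ 2 ≤ 𝓛 (θ k)) ∧
    ((∀ k, τ k ≤ 2 / (δ * L)) → ∀ k, 𝓛 (θ (k + 1)) ≤ 𝓛 (θ k)) := by
  have hfin : ∀ k, J (θ k) ≠ ⊤ := by
    intro k
    cases k with
    | zero => exact fin_of_elastic_subgrad hJproper hJbot hsub0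
    | succ n => exact fin_of_min hJproper hJbot (hθrec n)
  have hsub : ∀ k, ESubgradAt J (v k - δ⁻¹ • θ k) (θ k) := by
    intro k
    cases k with
    | zero => exact J_subgrad_of_elastic hJconv hJbot hδ (hfin 0) hsub0
    | succ n =>
        exact J_subgrad_of_elastic hJconv hJbot hδ (hfin (n + 1))
          (elastic_subgrad_of_min hJbot hδ (hfin (n + 1)) (hθrec n))
  have hDsym : ∀ k, DBregSym J (v k - δ⁻¹ • θ k) (v (k + 1) - δ⁻¹ • θ (k + 1)) (θ (k + 1)) (θ k)
      = ⟪(v (k + 1) - δ⁻¹ • θ (k + 1)) - (v k - δ⁻¹ • θ k), θ (k + 1) - θ k⟫ := by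
    intro k
    simp only [DBregSym, DBreg, inner_sub_left, inner_sub_right]
    ring
  have hval : ∀ k, ⟪(v (k + 1) - δ⁻¹ • θ (k + 1)) - (v k - δ⁻¹ • θ k), θ (k + 1) - θ k⟫
      = -(τ k * ⟪gradL (θ k), θ (k + 1) - θ k⟫) - δ⁻¹ * ‖θ (k + 1) - θ k‖ ^ 2 := by
    intro k
    rw [hvrec k]
    have e : (v k - τ k • gradL (θ k) - δ⁻¹ • θ (k + 1)) - (v k - δ⁻¹ • θ k)
        = -(τ k • gradL (θ k)) - δ⁻¹ • (θ (k + 1) - θ k) := by module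
    rw [e, inner_sub_left, inner_neg_left, real_inner_smul_left, real_inner_smul_left,
      real_inner_self_eq_norm_sq]
  have main : ∀ k : ℕ,
      𝓛 (θ (k + 1)) +
        (1 / τ k) * DBregSym J (v k - δ⁻¹ • θ k) (v (k + 1) - δ⁻¹ • θ (k + 1))
          (θ (k + 1)) (θ k) +
        (2 - L * δ * τ k) / (2 * δ * τ k) * ‖θ (k + 1) - θ k‖ ^ 2 ≤ 𝓛 (θ k) := by
    intro k
    have hdes := descent_lemma 𝓛 gradL hgrad L hLip (θ k) (θ (k + 1))
    have hτ := hτpos k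
    have heq : (1 / τ k) * DBregSym J (v k - δ⁻¹ • θ k) (v (k + 1) - δ⁻¹ • θ (k + 1))
          (θ (k + 1)) (θ k)
        + (2 - L * δ * τ k) / (2 * δ * τ k) * ‖θ (k + 1) - θ k‖ ^ 2
        = -⟪gradL (θ k), θ (k + 1) - θ k⟫ - L / 2 * ‖θ (k + 1) - θ k‖ ^ 2 := by
      rw [hDsym k, hval k]
      field_simp
      ring
    linarith
  refine ⟨main, fun hτle k => ?_⟩
  have h1 := main k
  have hmono := subgrad_mono hJbot (hfin (k + 1)) (hfin k) (hsub (k + 1)) (hsub k)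
  have hD0 : 0 ≤ DBregSym J (v k - δ⁻¹ • θ k) (v (k + 1) - δ⁻¹ • θ (k + 1))
      (θ (k + 1)) (θ k) := by
    rw [hDsym k]; exact hmono
  have hτ := hτpos k
  have h2 : 0 ≤ (1 / τ k) * DBregSym J (v k - δ⁻¹ • θ k) (v (k + 1) - δ⁻¹ • θ (k + 1))
      (θ (k + 1)) (θ k) := mul_nonneg (by positivity) hD0
  have hτb : τ k * (δ * L) ≤ 2 := (le_div_iff₀ (by positivity)).1 (hτle k)
  have hc : 0 ≤ (2 - L * δ * τ k) / (2 * δ * τ k) :=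
    div_nonneg (by nlinarith) (by positivity)
  have h3 : 0 ≤ (2 - L * δ * τ k) / (2 * δ * τ k) * ‖θ (k + 1) - θ k‖ ^ 2 :=
    mul_nonneg hc (by positivity)
  linarith
end
end
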